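/- In the one-dimensional GBM₁(r_s, r_d) with r_s > 2r_d, condition on vertices u ∈ V₁, v ∈ V₂ with (u,v) an edge (so d_L(X_u, X_v) ≤ r_d). Then, conditioned on the positions of u and v, the number of common neighbors of u and v is distributed as Bin(n − 2, 2r_d), independently of d_L(X_u, X_v). -/

import Mathlib

open MeasureTheory ProbabilityTheory

/-- Geodesic distance on the circle of circumference 1, identified with `[0,1)`. -/
noncomputable def dL (x y : ℝ) : ℝ := min |x - y| (1 - |x - y|)

lemma dL_symm (a b : ℝ) : dL a b = dL b a := by
  unfold dL; rw [abs_sub_comm]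

lemma dL_triangle {a b c : ℝ} (ha : a ∈ Set.Ico (0:ℝ) 1) (hb : b ∈ Set.Ico (0:ℝ) 1)
    (hc : c ∈ Set.Ico (0:ℝ) 1) : dL a b ≤ dL a c + dL c b := by
  obtain ⟨ha0, ha1⟩ := ha; obtain ⟨hb0, hb1⟩ := hb; obtain ⟨hc0, hc1⟩ := hc
  unfold dL
  rcases min_cases |a-c| (1-|a-c|) with ⟨m2,c2⟩|⟨m2,c2⟩ <;>
    rcases min_cases |c-b| (1-|c-b|) with ⟨m3,c3⟩|⟨m3,c3⟩ <;>
    rw [m2, m3, min_le_iff] <;>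
    rcases abs_cases (a-b) with ⟨e1,s1⟩|⟨e1,s1⟩ <;>
    rcases abs_cases (a-c) with ⟨e2,s2⟩|⟨e2,s2⟩ <;>
    rcases abs_cases (c-b) with ⟨e3,s3⟩|⟨e3,s3⟩ <;>
    first | (left; linarith) | (right; linarith)

lemma arc_vol {y r : ℝ} (hy : y ∈ Set.Ico (0:ℝ) 1) (h0 : 0 ≤ r) (h1 : r < 1/2) :
    volume ({w | dL w y ≤ r} ∩ Set.Ico 0 1) = ENNReal.ofReal (2*r) := by
  obtain ⟨hy0, hy1⟩ := hy
  rcases lt_or_ge y r with hcase | hcase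
  · have hset : {w | dL w y ≤ r} ∩ Set.Ico 0 1
        = Set.Icc 0 (y+r) ∪ Set.Ico (y+1-r) 1 := by
      ext w
      simp only [Set.mem_inter_iff, Set.mem_setOf_eq, Set.mem_Ico, Set.mem_union,
        Set.mem_Icc, dL, min_le_iff]
      constructor
      · rintro ⟨h | h, hw0, hw1⟩ <;> rcases abs_cases (w-y) with ⟨e,s⟩|⟨e,s⟩ <;>
          first | (left; constructor <;> linarith) | (right; constructor <;> linarith)
      · rintro (⟨h1', h2'⟩ | ⟨h1', h2'⟩)
        · rcases abs_cases (w-y) with ⟨e,s⟩|⟨e,s⟩ <;>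
            exact ⟨Or.inl (by linarith), by linarith, by linarith⟩
        · rcases abs_cases (w-y) with ⟨e,s⟩|⟨e,s⟩ <;>
            exact ⟨Or.inr (by linarith), by linarith, by linarith⟩
    rw [hset, measure_union ?hd measurableSet_Ico, Real.volume_Icc, Real.volume_Ico,
      ← ENNReal.ofReal_add (by linarith) (by linarith)]
    · congr 1; ring
    · rw [Set.disjoint_left]; rintro w ⟨_, h2⟩ ⟨h3, _⟩; linarith
  · rcases lt_or_ge y (1-r) with hc2 | hc2
    · have hset : {w | dL w y ≤ r} ∩ Set.Ico 0 1 = Set.Icc (y-r) (y+r) := by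
        ext w
        simp only [Set.mem_inter_iff, Set.mem_setOf_eq, Set.mem_Ico, Set.mem_Icc,
          dL, min_le_iff]
        constructor
        · rintro ⟨h | h, hw0, hw1⟩ <;> rcases abs_cases (w-y) with ⟨e,s⟩|⟨e,s⟩ <;>
            constructor <;> linarith
        · rintro ⟨h1', h2'⟩
          rcases abs_cases (w-y) with ⟨e,s⟩|⟨e,s⟩ <;>
            exact ⟨Or.inl (by linarith), by linarith, by linarith⟩
      rw [hset, Real.volume_Icc]; congr 1; ring
    · have hset : {w | dL w y ≤ r} ∩ Set.Ico 0 1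
          = Set.Icc 0 (y-1+r) ∪ Set.Ico (y-r) 1 := by
        ext w
        simp only [Set.mem_inter_iff, Set.mem_setOf_eq, Set.mem_Ico, Set.mem_union,
          Set.mem_Icc, dL, min_le_iff]
        constructor
        · rintro ⟨h | h, hw0, hw1⟩ <;> rcases abs_cases (w-y) with ⟨e,s⟩|⟨e,s⟩ <;>
            first | (left; constructor <;> linarith) | (right; constructor <;> linarith)
        · rintro (⟨h1', h2'⟩ | ⟨h1', h2'⟩)
          · rcases abs_cases (w-y) with ⟨e,s⟩|⟨e,s⟩ <;>
              exact ⟨Or.inr (by linarith), by linarith, by linarith⟩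
          · rcases abs_cases (w-y) with ⟨e,s⟩|⟨e,s⟩ <;>
              exact ⟨Or.inl (by linarith), by linarith, by linarith⟩
      rw [hset, measure_union ?hd2 measurableSet_Ico, Real.volume_Icc, Real.volume_Ico,
        ← ENNReal.ofReal_add (by linarith) (by linarith)]
      · congr 1; ring
      · rw [Set.disjoint_left]; rintro w ⟨_, h2⟩ ⟨h3, _⟩; linarith

/-- In `GBM₁(r_s, r_d)` with `r_s > 2 r_d`, conditioned on an inter-cluster edge
`(u, v)` with `u ∈ V₁`, `v ∈ V₂` and `d_L(X_u, X_v) = x ≤ r_d`, the number of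
common neighbors is distributed as `Bin(n - 2, 2 r_d)`, independently of `x`.
The other `n - 2` vertices have i.i.d. uniform positions on `[0,1)`;
`c i = true` marks membership in `V₁` (so `n/2 - 1` vertices of each cluster
remain). A common neighbor `z ∈ V₁` must satisfy `d_L(z,u) ≤ r_s` and
`d_L(z,v) ≤ r_d`; a common neighbor `z ∈ V₂` must satisfy `d_L(z,u) ≤ r_d`
and `d_L(z,v) ≤ r_s`. -/
theorem gbm_common_neighbors_diff_cluster
    {Ω : Type*} [MeasurableSpace Ω] (μ : Measure Ω) [IsProbabilityMeasure μ]
    (n : ℕ) (hn : 4 ≤ n) (hn2 : 2 ∣ n)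
    (rs rd x : ℝ) (hrd : 0 ≤ rd) (h1 : 2 * rd < rs) (h2 : rs ≤ 1/2)
    (hxd : x ≤ rd)
    (xu xv : ℝ) (hxu : xu ∈ Set.Ico (0:ℝ) 1) (hxv : xv ∈ Set.Ico (0:ℝ) 1)
    (hx : dL xu xv = x)
    (W : Fin (n - 2) → Ω → ℝ) (c : Fin (n - 2) → Bool)
    (hc : Nat.card {i : Fin (n - 2) // c i = true} = n / 2 - 1)
    (hmeas : ∀ i, Measurable (W i))
    (hdist : ∀ i, μ.map (W i) = volume.restrict (Set.Ico (0:ℝ) 1))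
    (hindep : iIndepFun W μ)
    (k : ℕ) :
    μ {ω | Nat.card {i : Fin (n - 2) //
          if c i = true then dL (W i ω) xu ≤ rs ∧ dL (W i ω) xv ≤ rd
          else dL (W i ω) xu ≤ rd ∧ dL (W i ω) xv ≤ rs} = k}
      = ENNReal.ofReal (((n - 2).choose k : ℝ) * (2 * rd) ^ k *
          (1 - 2 * rd) ^ (n - 2 - k)) := by
  classical
  have hr2 : rd < 1/2 := by linarith
  set S : Fin (n - 2) → Set ℝ := fun i =>
    {w : ℝ | if c i = true then dL w xu ≤ rs ∧ dL w xv ≤ rd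
             else dL w xu ≤ rd ∧ dL w xv ≤ rs} with hSdef
  have hdLc : ∀ y : ℝ, Continuous fun w : ℝ => dL w y := by
    intro y
    have hca : Continuous fun w : ℝ => |w - y| :=
      (continuous_id.sub continuous_const).abs
    exact hca.min (continuous_const.sub hca)
  have hm : ∀ y r : ℝ, MeasurableSet {w : ℝ | dL w y ≤ r} := fun y r =>
    (isClosed_le (hdLc y) continuous_const).measurableSet
  have hSmeas : ∀ i, MeasurableSet (S i) := by
    intro i
    by_cases h : c i = true <;>
      simp only [hSdef, h, if_true, if_false, Set.setOf_and] <;>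
      exact (hm _ _).inter (hm _ _)
  -- arc measure
  have harc : ∀ i, volume (S i ∩ Set.Ico 0 1) = ENNReal.ofReal (2*rd) := by
    intro i
    by_cases h : c i = true
    · have he : S i ∩ Set.Ico 0 1 = {w | dL w xv ≤ rd} ∩ Set.Ico 0 1 := by
        ext w
        simp only [hSdef, h, if_true, Set.mem_inter_iff, Set.mem_setOf_eq, Set.mem_Ico]
        constructor
        · rintro ⟨⟨_, h2'⟩, hw⟩; exact ⟨h2', hw⟩
        · rintro ⟨h2', hw0, hw1⟩
          refine ⟨⟨?_, h2'⟩, hw0, hw1⟩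
          have ht := dL_triangle (a := w) (b := xu) (c := xv) ⟨hw0, hw1⟩ hxu hxv
          rw [dL_symm xv xu, hx] at ht
          linarith
      rw [he, arc_vol hxv hrd hr2]
    · have he : S i ∩ Set.Ico 0 1 = {w | dL w xu ≤ rd} ∩ Set.Ico 0 1 := by
        ext w
        simp only [hSdef, h, if_false, Set.mem_inter_iff, Set.mem_setOf_eq, Set.mem_Ico]
        constructor
        · rintro ⟨⟨h2', _⟩, hw⟩; exact ⟨h2', hw⟩
        · rintro ⟨h2', hw0, hw1⟩
          refine ⟨⟨h2', ?_⟩, hw0, hw1⟩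
          have ht := dL_triangle (a := w) (b := xv) (c := xu) ⟨hw0, hw1⟩ hxv hxu
          rw [hx] at ht
          linarith
      rw [he, arc_vol hxu hrd hr2]
  have hp : ∀ i, μ ((W i) ⁻¹' (S i)) = ENNReal.ofReal (2*rd) := by
    intro i
    rw [← Measure.map_apply (hmeas i) (hSmeas i), hdist i,
      Measure.restrict_apply (hSmeas i), harc i]
  have hq : ∀ i, μ ((W i) ⁻¹' (S i)ᶜ) = ENNReal.ofReal (1 - 2*rd) := by
    intro i
    rw [← Measure.map_apply (hmeas i) (hSmeas i).compl, hdist i,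
      Measure.restrict_apply (hSmeas i).compl]
    have he : (S i)ᶜ ∩ Set.Ico 0 1 = Set.Ico (0:ℝ) 1 \ (S i ∩ Set.Ico 0 1) := by
      ext w
      simp only [Set.mem_inter_iff, Set.mem_compl_iff, Set.mem_diff]
      tauto
    rw [he, measure_diff Set.inter_subset_right
      ((hSmeas i).inter measurableSet_Ico).nullMeasurableSet
      (by rw [harc i]; exact ENNReal.ofReal_ne_top), harc i, Real.volume_Ico,
      ← ENNReal.ofReal_sub _ (by linarith)]
    norm_num
  -- events
  set E : (Fin (n - 2) → Bool) → Set Ω :=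
    fun b => ⋂ i ∈ Finset.univ, (W i) ⁻¹' (if b i = true then S i else (S i)ᶜ) with hEdef
  have hsets_meas : ∀ (b : Fin (n - 2) → Bool) (i : Fin (n - 2)),
      MeasurableSet (if b i = true then S i else (S i)ᶜ) := by
    intro b i
    by_cases h : b i = true <;> simp only [h, if_true, if_false]
    · exact hSmeas i
    · exact (hSmeas i).compl
  have hEmeas : ∀ b, MeasurableSet (E b) := fun b =>
    Finset.measurableSet_biInter _ fun i _ => (hmeas i) (hsets_meas b i)
  have hEmem : ∀ b ω, ω ∈ E b ↔ ∀ i, (W i ω ∈ S i ↔ b i = true) := by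
    intro b ω
    simp only [hEdef, Set.mem_iInter, Set.mem_preimage, Finset.mem_univ, forall_true_left]
    refine forall_congr' fun i => ?_
    by_cases hb : b i = true <;> simp [hb]
  have hEvol : ∀ b : Fin (n - 2) → Bool,
      μ (E b) = ∏ i : Fin (n - 2), (if b i = true then ENNReal.ofReal (2*rd)
        else ENNReal.ofReal (1-2*rd)) := by
    intro b
    rw [hEdef]
    rw [hindep.measure_inter_preimage_eq_mul Finset.univ (fun i _ => hsets_meas b i)]
    refine Finset.prod_congr rfl fun i _ => ?_
    by_cases hb : b i = true <;> simp only [hb, if_true, if_false]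
    · exact hp i
    · exact hq i
  have hprodval : ∀ b : Fin (n - 2) → Bool,
      (Finset.univ.filter fun i => b i = true).card = k →
      (∏ i : Fin (n - 2), if b i = true then ENNReal.ofReal (2*rd) else ENNReal.ofReal (1-2*rd))
        = ENNReal.ofReal (2*rd) ^ k * ENNReal.ofReal (1-2*rd) ^ (n - 2 - k) := by
    intro b hb
    rw [Finset.prod_ite (fun _ => ENNReal.ofReal (2*rd)) (fun _ => ENNReal.ofReal (1-2*rd)),
      Finset.prod_const, Finset.prod_const, hb]
    congr 2
    have hcc := Finset.card_filter_add_card_filter_not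
      (s := (Finset.univ : Finset (Fin (n - 2)))) (p := fun i => b i = true)
    rw [Finset.card_univ, Fintype.card_fin] at hcc
    omega
  set Fk : Finset (Fin (n - 2) → Bool) :=
    Finset.univ.filter (fun b => (Finset.univ.filter fun i => b i = true).card = k) with hFk
  have hcount : ∀ ω : Ω, Nat.card {i : Fin (n - 2) //
      if c i = true then dL (W i ω) xu ≤ rs ∧ dL (W i ω) xv ≤ rd
      else dL (W i ω) xu ≤ rd ∧ dL (W i ω) xv ≤ rs}
      = (Finset.univ.filter fun i => W i ω ∈ S i).card := by
    intro ω
    have hpe : ∀ i : Fin (n - 2), (W i ω ∈ S i) =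
        (if c i = true then dL (W i ω) xu ≤ rs ∧ dL (W i ω) xv ≤ rd
         else dL (W i ω) xu ≤ rd ∧ dL (W i ω) xv ≤ rs) := by
      intro i; simp only [hSdef, Set.mem_setOf_eq]
    simp only [hpe]
    rw [Nat.card_eq_fintype_card, Fintype.card_subtype]
  have hsetEq : {ω | (Finset.univ.filter fun i => W i ω ∈ S i).card = k}
      = ⋃ b ∈ Fk, E b := by
    ext ω
    simp only [Set.mem_setOf_eq, Set.mem_iUnion, exists_prop, hFk, Finset.mem_filter,
      Finset.mem_univ, true_and]
    constructor
    · intro h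
      refine ⟨fun i => decide (W i ω ∈ S i), ?_, ?_⟩
      · have heq : (Finset.univ.filter fun i => decide (W i ω ∈ S i) = true)
            = Finset.univ.filter fun i => W i ω ∈ S i :=
          Finset.filter_congr (by intro i _; simp)
        rw [heq]; exact h
      · rw [hEmem]; intro i; simp
    · rintro ⟨b, hbk, hbE⟩
      rw [hEmem] at hbE
      have heq : (Finset.univ.filter fun i => W i ω ∈ S i)
          = Finset.univ.filter fun i => b i = true :=
        Finset.filter_congr (by intro i _; exact hbE i)
      rw [heq]; exact hbk
  have hdisj : (↑Fk : Set (Fin (n - 2) → Bool)).PairwiseDisjoint E := by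
    intro b _ b' _ hne
    rw [Function.onFun, Set.disjoint_left]
    intro ω hb hb'
    apply hne
    funext i
    rw [hEmem] at hb hb'
    have h1' := hb i
    have h2' := hb' i
    exact Bool.eq_iff_iff.mpr (h1'.symm.trans h2')
  have hFkcard : Fk.card = (n - 2).choose k := by
    have hbij : Fk.card
        = (Finset.powersetCard k (Finset.univ : Finset (Fin (n - 2)))).card := by
      refine Finset.card_bij' (fun b _ => Finset.univ.filter fun j => b j = true)
        (fun s _ => fun j => decide (j ∈ s)) ?_ ?_ ?_ ?_
      · intro b hb
        rw [Finset.mem_powersetCard]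
        rw [hFk, Finset.mem_filter] at hb
        exact ⟨Finset.subset_univ _, hb.2⟩
      · intro s hs
        rw [Finset.mem_powersetCard] at hs
        rw [hFk, Finset.mem_filter]
        refine ⟨Finset.mem_univ _, ?_⟩
        have heq : (Finset.univ.filter fun j => decide (j ∈ s) = true) = s := by
          ext j; simp
        rw [heq]; exact hs.2
      · intro b hb
        funext j
        by_cases h : b j = true <;> simp [h]
      · intro s hs
        ext j; simp
    rw [hbij, Finset.card_powersetCard, Finset.card_univ, Fintype.card_fin]
  have hgoal : {ω | Nat.card {i : Fin (n - 2) //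
      if c i = true then dL (W i ω) xu ≤ rs ∧ dL (W i ω) xv ≤ rd
      else dL (W i ω) xu ≤ rd ∧ dL (W i ω) xv ≤ rs} = k}
      = ⋃ b ∈ Fk, E b := by
    rw [← hsetEq]; ext ω; rw [Set.mem_setOf_eq, Set.mem_setOf_eq, hcount ω]
  rw [hgoal, measure_biUnion_finset hdisj (fun b _ => hEmeas b)]
  have hsum : ∀ b ∈ Fk, μ (E b)
      = ENNReal.ofReal (2*rd) ^ k * ENNReal.ofReal (1-2*rd) ^ (n - 2 - k) := by
    intro b hb
    rw [hFk, Finset.mem_filter] at hb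
    exact (hEvol b).trans (hprodval b hb.2)
  rw [Finset.sum_congr rfl hsum, Finset.sum_const, hFkcard, nsmul_eq_mul]
  rw [ENNReal.ofReal_mul (mul_nonneg (Nat.cast_nonneg _) (pow_nonneg (by linarith) k)),
    ENNReal.ofReal_mul (Nat.cast_nonneg _), ENNReal.ofReal_pow (by linarith),
    ENNReal.ofReal_pow (by linarith), ENNReal.ofReal_natCast]
  ring
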